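/- For any f, χ ∈ ⋀²g, viewed inside U(g)^⊗3 via antisymmetrisation, one has Alt₃( f¹²(χ¹³+χ²³) + χ¹²(f¹³+f²³) − f²³(χ¹²+χ¹³) − χ²³(f¹²+f¹³) ) = ⟦f,χ⟧, where the products are taken in U(g)^⊗3 and ⟦·,·⟧ is the Schouten bracket. -/

import Mathlib

/-!
STATEMENT 8: For f, χ ∈ ⋀²g viewed inside U(g)^⊗3 via antisymmetrisation,
Alt₃( f¹²(χ¹³+χ²³) + χ¹²(f¹³+f²³) − f²³(χ¹²+χ¹³) − χ²³(f¹²+f¹³) ) = ⟦f,χ⟧,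
with products in U(g)^⊗3 and ⟦·,·⟧ the Schouten bracket.  We state it for
decomposables f = f₁∧f₂, χ = χ₁∧χ₂ (to which the general case reduces by
bilinearity); then ⟦f,χ⟧ = Σ_{i,j}(−1)^{i+j}[fᵢ,χⱼ]∧f_{3−i}∧χ_{3−j}.
-/

open TensorProduct

noncomputable section

variable (K : Type*) [Field K] [CharZero K]
variable (g : Type*) [LieRing g] [LieAlgebra K g]

abbrev UEnv := UniversalEnvelopingAlgebra K g

attribute [local instance 100] LieRing.ofAssociativeRing

def iU : g →ₗ[K] UEnv K g := (UniversalEnvelopingAlgebra.ι K).toLinearMap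

abbrev T3 := (UEnv K g ⊗[K] UEnv K g) ⊗[K] UEnv K g

def pl12 : g ⊗[K] g →ₗ[K] T3 K g :=
  ((TensorProduct.mk K (UEnv K g ⊗[K] UEnv K g) (UEnv K g)).flip 1).comp
    (TensorProduct.map (iU K g) (iU K g))

def pl13 : g ⊗[K] g →ₗ[K] T3 K g :=
  TensorProduct.map (((TensorProduct.mk K (UEnv K g) (UEnv K g)).flip 1).comp (iU K g)) (iU K g)

def pl23 : g ⊗[K] g →ₗ[K] T3 K g :=
  TensorProduct.map ((TensorProduct.mk K (UEnv K g) (UEnv K g) 1).comp (iU K g)) (iU K g)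

def s1 : T3 K g →ₗ[K] T3 K g :=
  TensorProduct.map (TensorProduct.comm K (UEnv K g) (UEnv K g)).toLinearMap LinearMap.id

def s2 : T3 K g →ₗ[K] T3 K g :=
  (TensorProduct.assoc K (UEnv K g) (UEnv K g) (UEnv K g)).symm.toLinearMap ∘ₗ
    (TensorProduct.map LinearMap.id (TensorProduct.comm K (UEnv K g) (UEnv K g)).toLinearMap) ∘ₗ
      (TensorProduct.assoc K (UEnv K g) (UEnv K g) (UEnv K g)).toLinearMap

/-- The antisymmetrisation projector Alt₃. -/
def alt3 : T3 K g →ₗ[K] T3 K g :=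
  (6 : K)⁻¹ • (LinearMap.id - s1 K g - s2 K g + s1 K g ∘ₗ s2 K g + s2 K g ∘ₗ s1 K g
    - s1 K g ∘ₗ s2 K g ∘ₗ s1 K g)

/-- a ∧ b as an antisymmetric tensor in g ⊗ g. -/
def wdg2 (a b : g) : g ⊗[K] g := (2 : K)⁻¹ • (a ⊗ₜ[K] b - b ⊗ₜ[K] a)

def t3 (a b c : g) : T3 K g := (iU K g a ⊗ₜ[K] iU K g b) ⊗ₜ[K] iU K g c

/-- a ∧ b ∧ c as an antisymmetric tensor in U(g)^⊗3. -/
def wdg3 (a b c : g) : T3 K g :=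
  (6 : K)⁻¹ • (t3 K g a b c - t3 K g b a c - t3 K g a c b - t3 K g c b a
    + t3 K g b c a + t3 K g c a b)

variable {K g} in
set_option linter.unusedSectionVars false in
lemma s1_tmul (x y z : UEnv K g) : s1 K g ((x ⊗ₜ[K] y) ⊗ₜ[K] z) = (y ⊗ₜ[K] x) ⊗ₜ[K] z := by
  simp [s1]

variable {K g} in
set_option linter.unusedSectionVars false in
lemma s2_tmul (x y z : UEnv K g) : s2 K g ((x ⊗ₜ[K] y) ⊗ₜ[K] z) = (x ⊗ₜ[K] z) ⊗ₜ[K] y := by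
  simp [s2]

variable {K g} in
lemma alt3_tmul (x y z : UEnv K g) : alt3 K g ((x ⊗ₜ[K] y) ⊗ₜ[K] z) =
    (6 : K)⁻¹ • ((x ⊗ₜ[K] y) ⊗ₜ[K] z - (y ⊗ₜ[K] x) ⊗ₜ[K] z - (x ⊗ₜ[K] z) ⊗ₜ[K] y
      - (z ⊗ₜ[K] y) ⊗ₜ[K] x + (y ⊗ₜ[K] z) ⊗ₜ[K] x + (z ⊗ₜ[K] x) ⊗ₜ[K] y) := by
  simp only [alt3, LinearMap.smul_apply, LinearMap.sub_apply, LinearMap.add_apply,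
    LinearMap.id_apply, LinearMap.comp_apply, s1_tmul, s2_tmul]
  module

variable {K g} in
set_option linter.unusedSectionVars false in
lemma iU_lie (x y : g) : iU K g ⁅x, y⁆ = iU K g x * iU K g y - iU K g y * iU K g x := by
  have := LieHom.map_lie (UniversalEnvelopingAlgebra.ι K (L := g)) x y
  rw [Ring.lie_def] at this
  simpa [iU] using this

variable {K g} in
set_option linter.unusedSectionVars false in
lemma pl12_tmul (a b : g) : pl12 K g (a ⊗ₜ[K] b) = (iU K g a ⊗ₜ[K] iU K g b) ⊗ₜ[K] 1 := by
  simp [pl12]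

variable {K g} in
set_option linter.unusedSectionVars false in
lemma pl13_tmul (a b : g) : pl13 K g (a ⊗ₜ[K] b) = (iU K g a ⊗ₜ[K] 1) ⊗ₜ[K] iU K g b := by
  simp [pl13]

variable {K g} in
set_option linter.unusedSectionVars false in
lemma pl23_tmul (a b : g) :
    pl23 K g (a ⊗ₜ[K] b) = ((1 : UEnv K g) ⊗ₜ[K] iU K g a) ⊗ₜ[K] iU K g b := by
  simp [pl23]

set_option maxHeartbeats 4000000 in
theorem stmt8 (f₁ f₂ χ₁ χ₂ : g) :
    alt3 K g
      (pl12 K g (wdg2 K g f₁ f₂) * (pl13 K g (wdg2 K g χ₁ χ₂) + pl23 K g (wdg2 K g χ₁ χ₂))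
        + pl12 K g (wdg2 K g χ₁ χ₂) * (pl13 K g (wdg2 K g f₁ f₂) + pl23 K g (wdg2 K g f₁ f₂))
        - pl23 K g (wdg2 K g f₁ f₂) * (pl12 K g (wdg2 K g χ₁ χ₂) + pl13 K g (wdg2 K g χ₁ χ₂))
        - pl23 K g (wdg2 K g χ₁ χ₂) * (pl12 K g (wdg2 K g f₁ f₂) + pl13 K g (wdg2 K g f₁ f₂)))
      =
      wdg3 K g ⁅f₁, χ₁⁆ f₂ χ₂ - wdg3 K g ⁅f₁, χ₂⁆ f₂ χ₁
        - wdg3 K g ⁅f₂, χ₁⁆ f₁ χ₂ + wdg3 K g ⁅f₂, χ₂⁆ f₁ χ₁ := by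
  simp only [wdg2, wdg3, t3, iU_lie, map_smul, map_sub, map_add, pl12_tmul, pl13_tmul, pl23_tmul,
    smul_mul_assoc, mul_smul_comm, smul_smul, sub_mul, mul_sub, add_mul, mul_add,
    Algebra.TensorProduct.tmul_mul_tmul, one_mul, mul_one,
    smul_sub, smul_add, sub_tmul, tmul_sub, add_tmul, tmul_add,
    alt3_tmul]
  module

end
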